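/- Let U, V be open neighborhoods of 0 in ℂ × ℂ, let φ = (φ₁, φ₂) : U → V be a biholomorphism with φ(0) = 0, let g be complex analytic on V, and set f := g ∘ φ. Let α : ℂ → ℂ be analytic near 0 with α(0) = 0, and assume the function ψ(y) := φ₂(α(y), y) has vanishing order exactly 1 at 0, so that ψ is a local analytic isomorphism of (ℂ,0); define β(w) := φ₁(α(ψ⁻¹(w)), ψ⁻¹(w)), so that φ(α(y), y) = (β(ψ(y)), ψ(y)) near 0. If y ↦ f_x(α(y), y) and y ↦ f_y(α(y), y) do not both vanish identically near 0, then min( ord₀(y ↦ f_x(α(y),y)), ord₀(y ↦ f_y(α(y),y)) ) = min( ord₀(w ↦ g_x(β(w),w)), ord₀(w ↦ g_y(β(w),w)) ). (The gradient order along corresponding arcs is an analytic invariant.) -/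

import Mathlib

open Filter

/-- The vanishing order at `0` of a function `u : ℂ → ℂ`: the least `n` such that the
`n`-th Taylor coefficient of `u` at `0` is nonzero, in `ℕ∞` (`⊤` if none is). -/
noncomputable def ord₀ (u : ℂ → ℂ) : ℕ∞ :=
  sInf ((fun n : ℕ => (n : ℕ∞)) '' {n : ℕ | iteratedDeriv n u 0 ≠ 0})

noncomputable def AnalyticAt.order {u : ℂ → ℂ} {z₀ : ℂ} (_ : AnalyticAt ℂ u z₀) : ℕ∞ :=
  analyticOrderAt u z₀

lemma AnalyticAt.order_eq_top_iff {u : ℂ → ℂ} {z₀ : ℂ} (hu : AnalyticAt ℂ u z₀) :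
    hu.order = ⊤ ↔ ∀ᶠ z in nhds z₀, u z = 0 :=
  analyticOrderAt_eq_top

lemma AnalyticAt.order_eq_nat_iff {u : ℂ → ℂ} {z₀ : ℂ} (hu : AnalyticAt ℂ u z₀) (n : ℕ) :
    hu.order = n ↔ ∃ g : ℂ → ℂ, AnalyticAt ℂ g z₀ ∧ g z₀ ≠ 0 ∧
      ∀ᶠ z in nhds z₀, u z = (z - z₀) ^ n • g z :=
  hu.analyticOrderAt_eq_natCast

lemma iteratedDeriv_eq_smul_coeff {u : ℂ → ℂ} {p : FormalMultilinearSeries ℂ ℂ ℂ}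
    (hp : HasFPowerSeriesAt u p 0) (n : ℕ) :
    iteratedDeriv n u 0 = (n.factorial : ℂ) • p.coeff n := by
  obtain ⟨r, hr⟩ := hp
  have h := hr.factorial_smul (1 : ℂ) n
  rw [iteratedDeriv_eq_iteratedFDeriv, ← h, FormalMultilinearSeries.coeff]
  simp [Nat.smul_one_eq_cast]

lemma sInf_image_eq {S : Set ℕ} {m : ℕ} (hm : m ∈ S) (hlb : ∀ k ∈ S, m ≤ k) :
    sInf ((fun n : ℕ => (n : ℕ∞)) '' S) = m := by
  apply le_antisymm
  · exact sInf_le ⟨m, hm, rfl⟩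
  · apply le_sInf
    rintro x ⟨k, hk, rfl⟩
    show (m : ℕ∞) ≤ (k : ℕ∞)
    exact_mod_cast hlb k hk

lemma ord₀_eq_order {u : ℂ → ℂ} (hu : AnalyticAt ℂ u 0) : ord₀ u = hu.order := by
  obtain ⟨p, hp⟩ := id hu
  have hS : {n : ℕ | iteratedDeriv n u 0 ≠ 0} = {n : ℕ | p n ≠ 0} := by
    ext n
    simp only [Set.mem_setOf_eq, iteratedDeriv_eq_smul_coeff hp, smul_eq_mul, mul_ne_zero_iff]
    constructor
    · intro h; exact fun h0 => h.2 (by simp [FormalMultilinearSeries.coeff_eq_zero, h0])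
    · intro h
      exact ⟨Nat.cast_ne_zero.mpr n.factorial_ne_zero,
        fun h0 => h (FormalMultilinearSeries.coeff_eq_zero.mp h0)⟩
  by_cases hp0 : p = 0
  · have hzero : ∀ᶠ z in nhds (0 : ℂ), u z = 0 := by
      exact (hp0 ▸ hp).eventually_eq_zero
    rw [hu.order_eq_top_iff.mpr hzero]
    rw [ord₀, hS]
    simp [hp0, sInf_eq_top]
  · have horder : hu.order = (p.order : ℕ∞) := by
      rw [hu.order_eq_nat_iff]
      refine ⟨(Function.swap dslope 0)^[p.order] u,
        ⟨_, hp.has_fpower_series_iterate_dslope_fslope p.order⟩,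
        hp.iterate_dslope_fslope_ne_zero hp0, ?_⟩
      simpa using Filter.Eventually.of_forall (f := nhds (0:ℂ)) hp.eq_pow_order_mul_iterate_dslope
    rw [horder, ord₀, hS]
    exact sInf_image_eq (p.apply_order_ne_zero hp0)
      (fun k hk => not_lt.mp fun hlt => hk (p.apply_eq_zero_of_lt_order hlt))

lemma order_ge_iff {u : ℂ → ℂ} (hu : AnalyticAt ℂ u 0) (n : ℕ) :
    (n : ℕ∞) ≤ hu.order ↔ ∃ g : ℂ → ℂ, AnalyticAt ℂ g 0 ∧ ∀ᶠ z in nhds 0, u z = z ^ n * g z := by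
  constructor
  · intro hn
    rcases eq_or_ne hu.order ⊤ with htop | hne
    · refine ⟨0, analyticAt_const, ?_⟩
      filter_upwards [hu.order_eq_top_iff.mp htop] with z hz
      simp [hz]
    · obtain ⟨m, hm⟩ := WithTop.ne_top_iff_exists.mp hne
      have hnm : n ≤ m := by rw [← hm] at hn; exact WithTop.coe_le_coe.mp hn
      obtain ⟨g₀, hg₀, hg₀0, hev⟩ := (hu.order_eq_nat_iff m).mp hm.symm
      refine ⟨fun z => z ^ (m - n) * g₀ z, ((analyticAt_id.pow _).mul hg₀), ?_⟩
      filter_upwards [hev] with z hz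
      rw [hz]
      simp only [sub_zero, smul_eq_mul]
      rw [← mul_assoc, ← pow_add, Nat.add_sub_cancel' hnm]
  · rintro ⟨g, hg, hev⟩
    rcases eq_or_ne hg.order ⊤ with htop | hne
    · have : ∀ᶠ z in nhds (0 : ℂ), u z = 0 := by
        filter_upwards [hev, hg.order_eq_top_iff.mp htop] with z h1 h2
        simp [h1, h2]
      rw [hu.order_eq_top_iff.mpr this]
      exact le_top
    · obtain ⟨m, hm⟩ := WithTop.ne_top_iff_exists.mp hne
      obtain ⟨h, hh, hh0, hev2⟩ := (hg.order_eq_nat_iff m).mp hm.symm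
      have : hu.order = ((n + m : ℕ) : ℕ∞) := by
        rw [hu.order_eq_nat_iff]
        refine ⟨h, hh, hh0, ?_⟩
        filter_upwards [hev, hev2] with z h1 h2
        simp only [sub_zero, smul_eq_mul] at *
        rw [h1, h2, pow_add]; ring
      rw [this]
      exact_mod_cast Nat.le_add_right n m

lemma order_min_le_comb {u v F a c : ℂ → ℂ} (hu : AnalyticAt ℂ u 0) (hv : AnalyticAt ℂ v 0)
    (hF : AnalyticAt ℂ F 0) (ha : AnalyticAt ℂ a 0) (hc : AnalyticAt ℂ c 0)
    (hrep : ∀ᶠ z in nhds (0 : ℂ), F z = a z * u z + c z * v z) :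
    min hu.order hv.order ≤ hF.order := by
  rcases eq_or_ne (min hu.order hv.order) ⊤ with htop | hne
  · rw [min_eq_top] at htop
    have : ∀ᶠ z in nhds (0 : ℂ), F z = 0 := by
      filter_upwards [hrep, hu.order_eq_top_iff.mp htop.1, hv.order_eq_top_iff.mp htop.2]
        with z h1 h2 h3
      simp [h1, h2, h3]
    rw [hF.order_eq_top_iff.mpr this]; exact le_top
  · obtain ⟨n, hn⟩ := WithTop.ne_top_iff_exists.mp hne
    obtain ⟨g₁, hg₁, he₁⟩ := (order_ge_iff hu n).mp (hn.le.trans (min_le_left _ _))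
    obtain ⟨g₂, hg₂, he₂⟩ := (order_ge_iff hv n).mp (hn.le.trans (min_le_right _ _))
    rw [← hn]
    refine (order_ge_iff hF n).mpr ⟨fun z => a z * g₁ z + c z * g₂ z,
      (ha.mul hg₁).add (hc.mul hg₂), ?_⟩
    filter_upwards [hrep, he₁, he₂] with z h1 h2 h3
    rw [h1, h2, h3]; ring

lemma order_comp_eq {u ψ : ℂ → ℂ} (hu : AnalyticAt ℂ u 0) (hψa : AnalyticAt ℂ ψ 0)
    (hψ0 : ψ 0 = 0) (hψ1 : hψa.order = 1)
    (hc : AnalyticAt ℂ (fun y => u (ψ y)) 0) : hc.order = hu.order := by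
  obtain ⟨w, hw, hw0, hψev⟩ := (hψa.order_eq_nat_iff 1).mp (by exact_mod_cast hψ1)
  have htend : Filter.Tendsto ψ (nhds 0) (nhds 0) := by
    have := hψa.continuousAt.tendsto
    rwa [hψ0] at this
  rcases eq_or_ne hu.order ⊤ with htop | hne
  · rw [htop, hc.order_eq_top_iff.mpr]
    filter_upwards [htend.eventually (hu.order_eq_top_iff.mp htop)] with y hy using hy
  · obtain ⟨m, hm⟩ := WithTop.ne_top_iff_exists.mp hne
    obtain ⟨g, hg, hg0, hev⟩ := (hu.order_eq_nat_iff m).mp hm.symm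
    have hg' : AnalyticAt ℂ g (ψ 0) := by rwa [hψ0]
    have hgψ : AnalyticAt ℂ (fun y => g (ψ y)) 0 := hg'.comp hψa
    rw [← hm]
    refine (hc.order_eq_nat_iff m).mpr ⟨fun y => (w y) ^ m * g (ψ y), (hw.pow m).mul hgψ, ?_, ?_⟩
    · simp only [hψ0] at *
      exact mul_ne_zero (pow_ne_zero m hw0) hg0
    · filter_upwards [htend.eventually hev, hψev] with y h1 h2
      simp only [sub_zero, smul_eq_mul, pow_one] at *
      rw [h1, h2]; ring

lemma clm_decomp (L : ℂ × ℂ →L[ℂ] ℂ) (v : ℂ × ℂ) :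
    L v = v.1 * L (1, 0) + v.2 * L (0, 1) := by
  have h : v = v.1 • ((1:ℂ), (0:ℂ)) + v.2 • ((0:ℂ), (1:ℂ)) := by simp [Prod.ext_iff]
  nth_rewrite 1 [h]
  rw [map_add, map_smul, map_smul]
  simp [smul_eq_mul]

lemma analyticAt_clm_eval {F : Type*} [NormedAddCommGroup F] [NormedSpace ℂ F]
    {T : ℂ → ℂ × ℂ →L[ℂ] F} (h : AnalyticAt ℂ T 0) (v : ℂ × ℂ) :
    AnalyticAt ℂ (fun y => T y v) 0 :=
  ((ContinuousLinearMap.apply ℂ F v).analyticAt _).comp h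

lemma det_ne_zero (L M : ℂ × ℂ →L[ℂ] ℂ × ℂ)
    (hDcomp : M.comp L = ContinuousLinearMap.id ℂ (ℂ × ℂ)) :
    (L (1,0)).1 * (L (0,1)).2 - (L (0,1)).1 * (L (1,0)).2 ≠ 0 := by
  intro hdet
  have hinj : ∀ v : ℂ × ℂ, L v = 0 → v = 0 := by
    intro v hv
    have h := ContinuousLinearMap.ext_iff.mp hDcomp v
    simp only [ContinuousLinearMap.comp_apply, ContinuousLinearMap.id_apply] at h
    rw [hv, map_zero] at h
    exact h.symm
  have key : ∀ x y : ℂ, L (x, y) = x • L (1,0) + y • L (0,1) := by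
    intro x y
    have h : ((x, y) : ℂ × ℂ) = x • ((1:ℂ), (0:ℂ)) + y • ((0:ℂ), (1:ℂ)) := by
      simp [Prod.ext_iff]
    rw [h, map_add, map_smul, map_smul]
  have e1 : ((L (0,1)).2, -(L (1,0)).2) = (0 : ℂ × ℂ) := by
    apply hinj
    rw [key]
    apply Prod.ext <;>
      simp only [Prod.fst_add, Prod.snd_add, Prod.smul_fst, Prod.smul_snd, smul_eq_mul,
        Prod.fst_zero, Prod.snd_zero] <;>
      (first | ring1 | linear_combination hdet | linear_combination -hdet)
  have hd : (L (0,1)).2 = 0 := by have := congrArg Prod.fst e1; simpa using this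
  have hc : (L (1,0)).2 = 0 := by have := congrArg Prod.snd e1; simpa using this
  have e2 : ((L (0,1)).1, -(L (1,0)).1) = (0 : ℂ × ℂ) := by
    apply hinj
    rw [key]
    apply Prod.ext <;>
      simp only [Prod.fst_add, Prod.snd_add, Prod.smul_fst, Prod.smul_snd, smul_eq_mul,
        Prod.fst_zero, Prod.snd_zero] <;>
      (first | ring1 | simp [hc, hd] | (rw [hc, hd]; ring))
  have hb : (L (0,1)).1 = 0 := by have := congrArg Prod.fst e2; simpa using this
  have ha : (L (1,0)).1 = 0 := by have := congrArg Prod.snd e2; simpa using this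
  have : ((1:ℂ), (0:ℂ)) = (0 : ℂ × ℂ) := by
    apply hinj
    apply Prod.ext
    · simpa using ha
    · simpa using hc
  simpa [Prod.ext_iff] using this

/-- Let `φ = (φ₁,φ₂) : U → V` be a biholomorphism between neighbourhoods
of `0 ∈ ℂ × ℂ` with `φ(0) = 0`, `g` analytic on `V`, and `f := g ∘ φ`. Let `α` be an
arc analytic near `0` with `α(0)=0`, suppose `ψ(y) := φ₂(α(y),y)` has vanishing order
exactly `1` at `0` (so it has a local analytic inverse `ψ⁻¹`), and let
`β(w) := φ₁(α(ψ⁻¹(w)), ψ⁻¹(w))`, so that `φ(α(y),y) = (β(ψ(y)), ψ(y))` near `0`.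
If `f_x` and `f_y` do not both vanish identically along `α`, then the gradient order of
`f` along `α` equals the gradient order of `g` along `β`. -/
theorem gradient_order_analytic_invariant
    (U V : Set (ℂ × ℂ)) (hUopen : IsOpen U) (hVopen : IsOpen V)
    (h0U : ((0 : ℂ), (0 : ℂ)) ∈ U) (h0V : ((0 : ℂ), (0 : ℂ)) ∈ V)
    (φ φinv : ℂ × ℂ → ℂ × ℂ)
    (hφ : ∀ p ∈ U, AnalyticAt ℂ φ p) (hφinv : ∀ p ∈ V, AnalyticAt ℂ φinv p)
    (hφUV : Set.MapsTo φ U V) (hφinvVU : Set.MapsTo φinv V U)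
    (hleft : ∀ p ∈ U, φinv (φ p) = p) (hright : ∀ p ∈ V, φ (φinv p) = p)
    (hφ0 : φ (0, 0) = (0, 0))
    (g : ℂ × ℂ → ℂ) (hg : ∀ p ∈ V, AnalyticAt ℂ g p)
    (f : ℂ × ℂ → ℂ) (hf : f = g ∘ φ)
    (α : ℂ → ℂ) (hα : AnalyticAt ℂ α 0) (hα0 : α 0 = 0)
    (ψ : ℂ → ℂ) (hψ : ψ = fun y => (φ (α y, y)).2)
    (hψord : ord₀ ψ = 1)
    (ψinv : ℂ → ℂ) (hψinv : AnalyticAt ℂ ψinv 0) (hψinv0 : ψinv 0 = 0)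
    (hψleft : ∀ᶠ y in nhds (0 : ℂ), ψinv (ψ y) = y)
    (hψright : ∀ᶠ w in nhds (0 : ℂ), ψ (ψinv w) = w)
    (β : ℂ → ℂ) (hβ : β = fun w => (φ (α (ψinv w), ψinv w)).1)
    (hne : ¬ ((∀ᶠ y in nhds (0 : ℂ), fderiv ℂ f (α y, y) (1, 0) = 0) ∧
              (∀ᶠ y in nhds (0 : ℂ), fderiv ℂ f (α y, y) (0, 1) = 0))) :
    min (ord₀ (fun y => fderiv ℂ f (α y, y) (1, 0)))
        (ord₀ (fun y => fderiv ℂ f (α y, y) (0, 1)))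
      = min (ord₀ (fun w => fderiv ℂ g (β w, w) (1, 0)))
            (ord₀ (fun w => fderiv ℂ g (β w, w) (0, 1))) := by
  subst hf
  -- basic analyticity of the arc
  have harc : AnalyticAt ℂ (fun y : ℂ => (α y, y)) 0 := hα.prod analyticAt_id
  have hφ00 : AnalyticAt ℂ φ ((0 : ℂ), (0 : ℂ)) := hφ _ h0U
  have htendarc : Tendsto (fun y : ℂ => (α y, y)) (nhds 0) (nhds ((0:ℂ), (0:ℂ))) := by
    have := harc.continuousAt.tendsto
    simpa [hα0] using this
  have htendφarc : Tendsto (fun y : ℂ => φ (α y, y)) (nhds 0) (nhds ((0:ℂ), (0:ℂ))) := by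
    have h1 : Tendsto φ (nhds ((0:ℂ),(0:ℂ))) (nhds ((0:ℂ),(0:ℂ))) := by
      have := hφ00.continuousAt.tendsto
      rwa [hφ0] at this
    exact h1.comp htendarc
  have hevU : ∀ᶠ y in nhds (0:ℂ), (α y, y) ∈ U :=
    htendarc.eventually (hUopen.eventually_mem h0U)
  have hevV : ∀ᶠ y in nhds (0:ℂ), φ (α y, y) ∈ V :=
    htendφarc.eventually (hVopen.eventually_mem h0V)
  -- ψ
  have hψa : AnalyticAt ℂ ψ 0 := by
    rw [hψ]
    have hφα : AnalyticAt ℂ φ ((fun y : ℂ => (α y, y)) 0) := by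
      simpa [hα0] using hφ00
    have hφcomparc : AnalyticAt ℂ (fun y : ℂ => φ (α y, y)) 0 := AnalyticAt.comp (f := fun y : ℂ => (α y, y)) hφα harc
    exact analyticAt_snd.comp hφcomparc
  have hψ0 : ψ 0 = 0 := by rw [hψ]; simp only [hα0, hφ0]
  have hψord1 : hψa.order = 1 := by rw [← ord₀_eq_order hψa, hψord]
  -- β
  have hαinv : AnalyticAt ℂ α (ψinv 0) := by rwa [hψinv0]
  have harcinv : AnalyticAt ℂ (fun w : ℂ => (α (ψinv w), ψinv w)) 0 :=
    (hαinv.comp hψinv).prod hψinv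
  have hβa : AnalyticAt ℂ β 0 := by
    rw [hβ]
    have hφβ : AnalyticAt ℂ φ ((fun w : ℂ => (α (ψinv w), ψinv w)) 0) := by
      simpa [hψinv0, hα0] using hφ00
    have hφcomparcinv : AnalyticAt ℂ (fun w : ℂ => φ (α (ψinv w), ψinv w)) 0 := AnalyticAt.comp (f := fun w : ℂ => (α (ψinv w), ψinv w)) hφβ harcinv
    exact analyticAt_fst.comp hφcomparcinv
  have hβ0 : β 0 = 0 := by rw [hβ]; simp only [hψinv0, hα0, hφ0]
  -- analyticity of the derivative entries of φ along the arc
  have hφU' : AnalyticOnNhd ℂ φ U := fun p hp => hφ p hp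
  have hdφU : AnalyticOnNhd ℂ (fderiv ℂ φ) U := hφU'.fderiv
  have hdφarc0 : AnalyticAt ℂ (fderiv ℂ φ) ((α 0 : ℂ), (0:ℂ)) := by
    rw [hα0]; exact hdφU _ h0U
  have hDφarc : AnalyticAt ℂ (fun y : ℂ => fderiv ℂ φ (α y, y)) 0 := AnalyticAt.comp (f := fun y : ℂ => (α y, y)) hdφarc0 harc
  have hAa : AnalyticAt ℂ (fun y : ℂ => (fderiv ℂ φ (α y, y) ((1:ℂ), (0:ℂ))).1) 0 :=
    analyticAt_fst.comp (analyticAt_clm_eval hDφarc ((1:ℂ), (0:ℂ)))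
  have hCa : AnalyticAt ℂ (fun y : ℂ => (fderiv ℂ φ (α y, y) ((1:ℂ), (0:ℂ))).2) 0 :=
    analyticAt_snd.comp (analyticAt_clm_eval hDφarc ((1:ℂ), (0:ℂ)))
  have hBa : AnalyticAt ℂ (fun y : ℂ => (fderiv ℂ φ (α y, y) ((0:ℂ), (1:ℂ))).1) 0 :=
    analyticAt_fst.comp (analyticAt_clm_eval hDφarc ((0:ℂ), (1:ℂ)))
  have hDa : AnalyticAt ℂ (fun y : ℂ => (fderiv ℂ φ (α y, y) ((0:ℂ), (1:ℂ))).2) 0 :=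
    analyticAt_snd.comp (analyticAt_clm_eval hDφarc ((0:ℂ), (1:ℂ)))
  -- analyticity of f-derivatives along the arc
  have h00W : ((0:ℂ), (0:ℂ)) ∈ U ∩ φ ⁻¹' V := ⟨h0U, by rw [Set.mem_preimage, hφ0]; exact h0V⟩
  have hfW : AnalyticOnNhd ℂ (g ∘ φ) (U ∩ φ ⁻¹' V) :=
    fun p hp => (hg _ hp.2).comp (hφ _ hp.1)
  have hdfW : AnalyticOnNhd ℂ (fderiv ℂ (g ∘ φ)) (U ∩ φ ⁻¹' V) := hfW.fderiv
  have hdfarc0 : AnalyticAt ℂ (fderiv ℂ (g ∘ φ)) ((α 0 : ℂ), (0:ℂ)) := by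
    rw [hα0]; exact hdfW _ h00W
  have hDfarc : AnalyticAt ℂ (fun y : ℂ => fderiv ℂ (g ∘ φ) (α y, y)) 0 := AnalyticAt.comp (f := fun y : ℂ => (α y, y)) hdfarc0 harc
  have hF₁a : AnalyticAt ℂ (fun y : ℂ => fderiv ℂ (g ∘ φ) (α y, y) (1, 0)) 0 :=
    analyticAt_clm_eval hDfarc (1, 0)
  have hF₂a : AnalyticAt ℂ (fun y : ℂ => fderiv ℂ (g ∘ φ) (α y, y) (0, 1)) 0 :=
    analyticAt_clm_eval hDfarc (0, 1)
  -- analyticity of g-derivatives along β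
  have hgV' : AnalyticOnNhd ℂ g V := fun p hp => hg p hp
  have hdgV : AnalyticOnNhd ℂ (fderiv ℂ g) V := hgV'.fderiv
  have hβarc : AnalyticAt ℂ (fun w : ℂ => (β w, w)) 0 := hβa.prod analyticAt_id
  have hdgβ0 : AnalyticAt ℂ (fderiv ℂ g) ((β 0 : ℂ), (0:ℂ)) := by
    rw [hβ0]; exact hdgV _ h0V
  have hDgβ : AnalyticAt ℂ (fun w : ℂ => fderiv ℂ g (β w, w)) 0 := AnalyticAt.comp (f := fun w : ℂ => (β w, w)) hdgβ0 hβarc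
  have hG₁a : AnalyticAt ℂ (fun w : ℂ => fderiv ℂ g (β w, w) (1, 0)) 0 :=
    analyticAt_clm_eval hDgβ (1, 0)
  have hG₂a : AnalyticAt ℂ (fun w : ℂ => fderiv ℂ g (β w, w) (0, 1)) 0 :=
    analyticAt_clm_eval hDgβ (0, 1)
  -- the compositions with ψ
  have hG₁ψ : AnalyticAt ℂ (fun w : ℂ => fderiv ℂ g (β w, w) (1, 0)) (ψ 0) := by rwa [hψ0]
  have hG₂ψ : AnalyticAt ℂ (fun w : ℂ => fderiv ℂ g (β w, w) (0, 1)) (ψ 0) := by rwa [hψ0]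
  have hH₁a : AnalyticAt ℂ (fun y : ℂ => fderiv ℂ g (β (ψ y), ψ y) (1, 0)) 0 := hG₁ψ.comp hψa
  have hH₂a : AnalyticAt ℂ (fun y : ℂ => fderiv ℂ g (β (ψ y), ψ y) (0, 1)) 0 := hG₂ψ.comp hψa
  -- φ along the arc equals (β ∘ ψ, ψ)
  have hphiarc : ∀ᶠ y in nhds (0:ℂ), φ (α y, y) = (β (ψ y), ψ y) := by
    filter_upwards [hψleft] with y hy
    have h2 : (φ (α y, y)).2 = ψ y := by rw [hψ]
    have h1 : β (ψ y) = (φ (α y, y)).1 := by rw [hβ]; simp only [hy]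
    exact Prod.ext_iff.mpr ⟨h1.symm, h2⟩
  -- chain rule along the arc
  have hchain : ∀ᶠ y in nhds (0:ℂ), ∀ v : ℂ × ℂ,
      fderiv ℂ (g ∘ φ) (α y, y) v = fderiv ℂ g (β (ψ y), ψ y) (fderiv ℂ φ (α y, y) v) := by
    filter_upwards [hevU, hevV, hphiarc] with y h1 h2 h3
    intro v
    have hcomp := fderiv_comp (𝕜 := ℂ) (x := (α y, y))
      ((hg _ h2).differentiableAt) ((hφ _ h1).differentiableAt)
    rw [hcomp, ContinuousLinearMap.comp_apply, h3]
  -- forward representations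
  have hrep1 : ∀ᶠ y in nhds (0:ℂ),
      fderiv ℂ (g ∘ φ) (α y, y) (1, 0)
        = (fderiv ℂ φ (α y, y) ((1:ℂ), (0:ℂ))).1 * fderiv ℂ g (β (ψ y), ψ y) (1, 0)
          + (fderiv ℂ φ (α y, y) ((1:ℂ), (0:ℂ))).2 * fderiv ℂ g (β (ψ y), ψ y) (0, 1) := by
    filter_upwards [hchain] with y hy
    rw [hy (1, 0), clm_decomp]
  have hrep2 : ∀ᶠ y in nhds (0:ℂ),
      fderiv ℂ (g ∘ φ) (α y, y) (0, 1)
        = (fderiv ℂ φ (α y, y) ((0:ℂ), (1:ℂ))).1 * fderiv ℂ g (β (ψ y), ψ y) (1, 0)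
          + (fderiv ℂ φ (α y, y) ((0:ℂ), (1:ℂ))).2 * fderiv ℂ g (β (ψ y), ψ y) (0, 1) := by
    filter_upwards [hchain] with y hy
    rw [hy (0, 1), clm_decomp]
  -- invertibility of the derivative of φ at the origin
  have hid : ∀ᶠ p in nhds ((0:ℂ), (0:ℂ)), φinv (φ p) = p := by
    filter_upwards [hUopen.eventually_mem h0U] with p hp using hleft p hp
  have hDcomp : (fderiv ℂ φinv ((0:ℂ),(0:ℂ))).comp (fderiv ℂ φ ((0:ℂ),(0:ℂ)))
      = ContinuousLinearMap.id ℂ (ℂ × ℂ) := by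
    have hdiffinv : DifferentiableAt ℂ φinv (φ ((0:ℂ),(0:ℂ))) := by
      rw [hφ0]; exact (hφinv _ h0V).differentiableAt
    have hdiffφ : DifferentiableAt ℂ φ ((0:ℂ),(0:ℂ)) := hφ00.differentiableAt
    have h1 : fderiv ℂ (fun p : ℂ × ℂ => φinv (φ p)) ((0:ℂ),(0:ℂ))
        = fderiv ℂ (id : ℂ × ℂ → ℂ × ℂ) ((0:ℂ),(0:ℂ)) :=
      Filter.EventuallyEq.fderiv_eq hid
    rw [fderiv_id] at h1
    have h2 := fderiv_comp (𝕜 := ℂ) (x := ((0:ℂ),(0:ℂ))) hdiffinv hdiffφ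
    rw [hφ0] at h2
    rw [← h2]
    exact h1
  have hdet0 := det_ne_zero _ _ hDcomp
  -- the determinant function along the arc
  have hdeta : AnalyticAt ℂ (fun y : ℂ =>
      (fderiv ℂ φ (α y, y) ((1:ℂ), (0:ℂ))).1 * (fderiv ℂ φ (α y, y) ((0:ℂ), (1:ℂ))).2
        - (fderiv ℂ φ (α y, y) ((0:ℂ), (1:ℂ))).1 * (fderiv ℂ φ (α y, y) ((1:ℂ), (0:ℂ))).2) 0 :=
    (hAa.mul hDa).sub (hBa.mul hCa)
  have hdet00 : ((fun y : ℂ =>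
      (fderiv ℂ φ (α y, y) ((1:ℂ), (0:ℂ))).1 * (fderiv ℂ φ (α y, y) ((0:ℂ), (1:ℂ))).2
        - (fderiv ℂ φ (α y, y) ((0:ℂ), (1:ℂ))).1 * (fderiv ℂ φ (α y, y) ((1:ℂ), (0:ℂ))).2) 0) ≠ 0 := by
    simpa [hα0] using hdet0
  have hdetinv : AnalyticAt ℂ (fun y : ℂ =>
      ((fderiv ℂ φ (α y, y) ((1:ℂ), (0:ℂ))).1 * (fderiv ℂ φ (α y, y) ((0:ℂ), (1:ℂ))).2
        - (fderiv ℂ φ (α y, y) ((0:ℂ), (1:ℂ))).1 * (fderiv ℂ φ (α y, y) ((1:ℂ), (0:ℂ))).2)⁻¹) 0 :=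
    hdeta.inv hdet00
  have hdetne : ∀ᶠ y in nhds (0:ℂ),
      (fderiv ℂ φ (α y, y) ((1:ℂ), (0:ℂ))).1 * (fderiv ℂ φ (α y, y) ((0:ℂ), (1:ℂ))).2
        - (fderiv ℂ φ (α y, y) ((0:ℂ), (1:ℂ))).1 * (fderiv ℂ φ (α y, y) ((1:ℂ), (0:ℂ))).2 ≠ 0 :=
    hdeta.continuousAt.eventually_ne hdet00
  -- reverse representations
  have hrep1' : ∀ᶠ y in nhds (0:ℂ),
      fderiv ℂ g (β (ψ y), ψ y) (1, 0)
        = ((fderiv ℂ φ (α y, y) ((0:ℂ), (1:ℂ))).2 *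
            ((fderiv ℂ φ (α y, y) ((1:ℂ), (0:ℂ))).1 * (fderiv ℂ φ (α y, y) ((0:ℂ), (1:ℂ))).2
              - (fderiv ℂ φ (α y, y) ((0:ℂ), (1:ℂ))).1 * (fderiv ℂ φ (α y, y) ((1:ℂ), (0:ℂ))).2)⁻¹)
            * fderiv ℂ (g ∘ φ) (α y, y) (1, 0)
          + (-(fderiv ℂ φ (α y, y) ((1:ℂ), (0:ℂ))).2 *
            ((fderiv ℂ φ (α y, y) ((1:ℂ), (0:ℂ))).1 * (fderiv ℂ φ (α y, y) ((0:ℂ), (1:ℂ))).2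
              - (fderiv ℂ φ (α y, y) ((0:ℂ), (1:ℂ))).1 * (fderiv ℂ φ (α y, y) ((1:ℂ), (0:ℂ))).2)⁻¹)
            * fderiv ℂ (g ∘ φ) (α y, y) (0, 1) := by
    filter_upwards [hrep1, hrep2, hdetne] with y h1 h2 h3
    rw [h1, h2]
    linear_combination (-(fderiv ℂ g (β (ψ y), ψ y) (1, 0))) * mul_inv_cancel₀ h3
  have hrep2' : ∀ᶠ y in nhds (0:ℂ),
      fderiv ℂ g (β (ψ y), ψ y) (0, 1)
        = (-(fderiv ℂ φ (α y, y) ((0:ℂ), (1:ℂ))).1 *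
            ((fderiv ℂ φ (α y, y) ((1:ℂ), (0:ℂ))).1 * (fderiv ℂ φ (α y, y) ((0:ℂ), (1:ℂ))).2
              - (fderiv ℂ φ (α y, y) ((0:ℂ), (1:ℂ))).1 * (fderiv ℂ φ (α y, y) ((1:ℂ), (0:ℂ))).2)⁻¹)
            * fderiv ℂ (g ∘ φ) (α y, y) (1, 0)
          + ((fderiv ℂ φ (α y, y) ((1:ℂ), (0:ℂ))).1 *
            ((fderiv ℂ φ (α y, y) ((1:ℂ), (0:ℂ))).1 * (fderiv ℂ φ (α y, y) ((0:ℂ), (1:ℂ))).2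
              - (fderiv ℂ φ (α y, y) ((0:ℂ), (1:ℂ))).1 * (fderiv ℂ φ (α y, y) ((1:ℂ), (0:ℂ))).2)⁻¹)
            * fderiv ℂ (g ∘ φ) (α y, y) (0, 1) := by
    filter_upwards [hrep1, hrep2, hdetne] with y h1 h2 h3
    rw [h1, h2]
    field_simp
    ring
  -- min-order comparisons
  have m1 := order_min_le_comb hH₁a hH₂a hF₁a hAa hCa hrep1
  have m2 := order_min_le_comb hH₁a hH₂a hF₂a hBa hDa hrep2
  have m3 := order_min_le_comb hF₁a hF₂a hH₁a (hDa.mul hdetinv) ((hCa.neg).mul hdetinv) hrep1'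
  have m4 := order_min_le_comb hF₁a hF₂a hH₂a ((hBa.neg).mul hdetinv) (hAa.mul hdetinv) hrep2'
  have hmin : min hF₁a.order hF₂a.order = min hH₁a.order hH₂a.order :=
    le_antisymm (le_min m3 m4) (le_min m1 m2)
  have e1 : hH₁a.order = hG₁a.order := order_comp_eq hG₁a hψa hψ0 hψord1 hH₁a
  have e2 : hH₂a.order = hG₂a.order := order_comp_eq hG₂a hψa hψ0 hψord1 hH₂a
  rw [ord₀_eq_order hF₁a, ord₀_eq_order hF₂a, ord₀_eq_order hG₁a, ord₀_eq_order hG₂a]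
  rw [hmin, e1, e2]
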